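/- If w is a rich finite word, then its palindromic closure w^(+) (the shortest palindrome having w as a prefix) is rich. -/

import Mathlib

open List

variable {A : Type*}

/-- All factors (contiguous subwords) of a word, as a list. -/
def Factors (w : List A) : List (List A) := w.tails.flatMap List.inits

/-- The set of distinct palindromic factors of `w` (including the empty word). -/
def palFactors [DecidableEq A] (w : List A) : Finset (List A) :=
  ((Factors w).filter (fun u => decide (u.reverse = u))).toFinset

/-- A word is rich if it has exactly `|w| + 1` distinct palindromic factors. -/
def IsRich [DecidableEq A] (w : List A) : Prop :=
  (palFactors w).card = w.length + 1

/-- The defect of a finite word. -/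
def defect [DecidableEq A] (w : List A) : ℕ :=
  w.length + 1 - (palFactors w).card

/-- `u` is a (finite) factor of the infinite word `z`. -/
def FactorOfInf (u : List A) (z : ℕ → A) : Prop :=
  ∃ i, u = (List.range u.length).map (fun k => z (i + k))

/-- An infinite word is rich if all of its finite factors are rich. -/
def InfRich [DecidableEq A] (z : ℕ → A) : Prop :=
  ∀ u : List A, FactorOfInf u z → IsRich u

/-- The longest palindromic suffix of `w`. -/
def lps [DecidableEq A] (w : List A) : List A :=
  (w.tails.find? (fun u => decide (u.reverse = u))).getD []

/-- The number of occurrences of `u` as a factor of `w` (counted by position). -/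
def occCount [DecidableEq A] (u w : List A) : ℕ :=
  w.tails.countP (fun t => decide (u <+: t))

/-- The periodic infinite word `u^∞`. -/
def periodicWord (u : List A) (hu : u ≠ []) : ℕ → A :=
  fun i => u.get ⟨i % u.length, Nat.mod_lt _ (List.length_pos_of_ne_nil hu)⟩

lemma mem_Factors' {w x : List A} : x ∈ Factors w ↔ x <:+: w := by
  simp only [Factors, mem_flatMap, mem_tails, mem_inits,
    infix_iff_prefix_suffix]
  tauto

lemma mem_palFactors' [DecidableEq A] {w x : List A} :
    x ∈ palFactors w ↔ x <:+: w ∧ x.reverse = x := by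
  simp [palFactors, List.mem_filter, mem_Factors']

lemma palFactors_mono' [DecidableEq A] {w₁ w₂ : List A} (h : w₁ <:+: w₂) :
    palFactors w₁ ⊆ palFactors w₂ := by
  intro x hx
  rw [mem_palFactors'] at hx ⊢
  exact ⟨hx.1.trans h, hx.2⟩

/-- key positional helper -/
lemma drop_take_infix' (q : List A) (i m r : ℕ) (h : i + m ≤ r) :
    (q.drop i).take m <:+: q.take r := by
  have h1 : ((q.take r).drop i).take m = (q.drop i).take m := by
    rw [drop_take, take_take, min_eq_left (by omega)]
  rw [← h1]
  exact infix_iff_prefix_suffix.mpr ⟨(q.take r).drop i, take_prefix _ _, drop_suffix _ _⟩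

lemma infix_iff_drop_take' {x w : List A} :
    x <:+: w ↔ ∃ i, i + x.length ≤ w.length ∧ x = (w.drop i).take x.length := by
  constructor
  · intro h
    obtain ⟨t, hpre, hsuf⟩ := infix_iff_prefix_suffix.mp h
    refine ⟨w.length - t.length, ?_, ?_⟩
    · have := hpre.length_le; have := hsuf.length_le; omega
    · have ht : t = w.drop (w.length - t.length) := suffix_iff_eq_drop.mp hsuf
      have hx : x = t.take x.length := prefix_iff_eq_take.mp hpre
      rw [← ht]; exact hx
  · rintro ⟨i, hle, hx⟩
    have := drop_take_infix' w i x.length w.length hle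
    rwa [take_length, ← hx] at this

lemma suffix_of_suffix_le' {s m x : List A} (hs : s <:+ x) (hm : m <:+ x)
    (h : s.length ≤ m.length) : s <:+ m := by
  rw [← reverse_prefix] at hs hm ⊢
  exact prefix_of_prefix_length_le hs hm (by simpa using h)

lemma pal_suffix_prefix' {s m : List A} (hs : s <:+ m) (hsp : s.reverse = s)
    (hmp : m.reverse = m) : s <+: m := by
  exact reverse_suffix.mp (by rwa [hsp, hmp])

lemma exists_max_pal_suffix' (x : List A) :
    ∃ m : List A, m <:+ x ∧ m.reverse = m ∧
      ∀ s : List A, s <:+ x → s.reverse = s → s.length ≤ m.length := by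
  classical
  set l := x.tails.filter (fun u => decide (u.reverse = u)) with hl
  have hne : ([] : List A) ∈ l := by simp [hl, List.mem_filter]
  have hlne : l ≠ [] := ne_nil_of_mem hne
  obtain ⟨m, hm⟩ : ∃ m, m ∈ l.argmax length := by
    cases h : l.argmax length with
    | none => exact absurd (List.argmax_eq_none.mp h) hlne
    | some m => exact ⟨m, by simp [h]⟩
  have hmem := List.argmax_mem hm
  rw [hl, List.mem_filter, mem_tails] at hmem
  refine ⟨m, hmem.1, by simpa using hmem.2, fun s hsx hsp => ?_⟩
  have hsl : s ∈ l := by simp [hl, List.mem_filter, hsx, hsp]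
  exact List.le_of_mem_argmax hsl hm

/-- a factor of `w` either ends strictly before the end (factor of dropLast) or is a suffix -/
lemma infix_dropLast_or_suffix' {y w : List A} (h : y <:+: w) :
    y <:+: w.dropLast ∨ y <:+ w := by
  obtain ⟨i, hle, hy⟩ := infix_iff_drop_take'.mp h
  rcases lt_or_eq_of_le hle with hlt | heq
  · left
    rw [dropLast_eq_take, hy]
    exact drop_take_infix' w i y.length (w.length - 1) (by omega)
  · right
    rw [hy, take_of_length_le (by rw [length_drop]; omega)]
    exact drop_suffix _ _

lemma palFactors_append_le' [DecidableEq A] (x : List A) (a : A) :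
    (palFactors (x ++ [a])).card ≤ (palFactors x).card + 1 := by
  obtain ⟨m, hmsuf, hmpal, hmax⟩ := exists_max_pal_suffix' (x ++ [a])
  have hsub : palFactors (x ++ [a]) ⊆ insert m (palFactors x) := by
    intro y hy
    rw [mem_palFactors'] at hy
    obtain ⟨hyinf, hypal⟩ := hy
    rw [Finset.mem_insert, mem_palFactors']
    rcases infix_dropLast_or_suffix' hyinf with hyx | hysuf
    · right
      refine ⟨?_, hypal⟩
      rwa [dropLast_concat] at hyx
    · -- y is a palindromic suffix of x ++ [a]
      rcases eq_or_lt_of_le (hmax y hysuf hypal) with heq | hlt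
      · exact Or.inl ((suffix_of_suffix_le' hysuf hmsuf heq.le).eq_of_length heq)
      · right
        refine ⟨?_, hypal⟩
        have hym : y <+: m := pal_suffix_prefix' (suffix_of_suffix_le' hysuf hmsuf hlt.le) hypal hmpal
        have hmdrop : m = (x ++ [a]).drop ((x ++ [a]).length - m.length) :=
          suffix_iff_eq_drop.mp hmsuf
        have hy2 : y = ((x ++ [a]).drop ((x ++ [a]).length - m.length)).take y.length := by
          rw [← hmdrop]; exact prefix_iff_eq_take.mp hym
        have hinf := (hy2 ▸ drop_take_infix' (x ++ [a]) ((x ++ [a]).length - m.length)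
          y.length x.length (by
            have hml := hmsuf.length_le
            simp only [length_append, length_singleton] at *
            omega) : y <:+: (x ++ [a]).take x.length)
        rwa [take_left] at hinf
  calc (palFactors (x ++ [a])).card ≤ (insert m (palFactors x)).card := Finset.card_le_card hsub
    _ ≤ (palFactors x).card + 1 := Finset.card_insert_le _ _

lemma card_palFactors_le' [DecidableEq A] (x : List A) :
    (palFactors x).card ≤ x.length + 1 := by
  induction x using List.reverseRecOn with
  | nil =>
    have h : palFactors ([] : List A) = {[]} := by
      ext y
      simp only [mem_palFactors', infix_nil, Finset.mem_singleton]
      constructor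
      · exact fun hy => hy.1
      · rintro rfl; simp
    rw [h]; simp
  | append_singleton x a ih =>
    calc (palFactors (x ++ [a])).card ≤ (palFactors x).card + 1 := palFactors_append_le' x a
      _ ≤ x.length + 1 + 1 := by omega
      _ = (x ++ [a]).length + 1 := by simp

lemma rich_unioccurrent' [DecidableEq A] {w u : List A} (hw : IsRich w) (hne : w ≠ [])
    (hsuf : u <:+ w) (hpal : u.reverse = u)
    (hmax : ∀ s : List A, s <:+ w → s.reverse = s → s.length ≤ u.length) :
    ¬ u <:+: w.dropLast := by
  intro hocc
  have h1 : (palFactors w.dropLast).card < (palFactors w).card := by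
    have h2 := card_palFactors_le' (A := A) w.dropLast
    have h3 : w.dropLast.length = w.length - 1 := length_dropLast
    have h4 : 0 < w.length := length_pos_iff.mpr hne
    rw [hw]; omega
  have hsub : palFactors w.dropLast ⊆ palFactors w :=
    palFactors_mono' (dropLast_prefix w).isInfix
  obtain ⟨y, hyw, hynd⟩ := Finset.exists_of_ssubset
    ⟨hsub, fun h => absurd (Finset.card_le_card h) (not_le.mpr h1)⟩
  rw [mem_palFactors'] at hyw
  have hysuf : y <:+ w := by
    rcases infix_dropLast_or_suffix' hyw.1 with h | h
    · exact absurd (mem_palFactors'.mpr ⟨h, hyw.2⟩) hynd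
    · exact h
  have hyu : y <+: u :=
    pal_suffix_prefix' (suffix_of_suffix_le' hysuf hsuf (hmax y hysuf hyw.2)) hyw.2 hpal
  exact hynd (mem_palFactors'.mpr ⟨hyu.isInfix.trans hocc, hyw.2⟩)

lemma central_pal' {p : List A} (hpal : p.reverse = p) {e : ℕ} (he1 : e ≤ p.length)
    (he2 : p.length ≤ 2 * e) :
    ((p.drop (p.length - e)).take (2 * e - p.length)).reverse
      = (p.drop (p.length - e)).take (2 * e - p.length) := by
  rw [reverse_take, reverse_drop, hpal, length_drop, drop_take]
  congr 1
  · omega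
  · congr 1; omega

theorem palindromic_closure_rich' [DecidableEq A] (w p : List A)
    (hrich : IsRich w) (hpal : p.reverse = p) (hpref : w <+: p)
    (hmin : ∀ q : List A, q.reverse = q → w <+: q → p.length ≤ q.length) :
    IsRich p := by
  set n := p.length with hn
  set W := w.length with hW
  have hWn : W ≤ n := by have := hpref.length_le; omega
  have hn2W : n ≤ 2 * W := by
    have hq := hmin (w ++ w.reverse) (by simp) (prefix_append _ _)
    simp only [length_append, length_reverse] at hq
    omega
  have hwtake : w = p.take W := by rw [hW]; exact prefix_iff_eq_take.mp hpref
  set u : List A := (p.drop (n - W)).take (2 * W - n) with hu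
  have hupal : u.reverse = u := by rw [hu, hn]; exact central_pal' hpal (by omega) (by omega)
  have husuf : u <:+ w := by
    rw [hwtake, hu]
    have h : (p.take W).drop (n - W) = (p.drop (n - W)).take (2 * W - n) := by
      rw [drop_take]; congr 1; omega
    rw [← h]; exact drop_suffix _ _
  have hulen : u.length = 2 * W - n := by
    rw [hu, length_take, length_drop]; omega
  have humax : ∀ s : List A, s <:+ w → s.reverse = s → s.length ≤ u.length := by
    intro s hs hsp
    by_contra hlt
    push_neg at hlt
    have hsW : s.length ≤ W := by have := hs.length_le; omega
    have hsplit : w = w.take (W - s.length) ++ s := by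
      conv_lhs => rw [← take_append_drop (W - s.length) w]
      congr 1
      rw [hW]
      exact (suffix_iff_eq_drop.mp hs).symm
    have hq := hmin (w ++ (w.take (W - s.length)).reverse) (by
        have hk : (w.take (W - s.length)).length = W - s.length := by simp only [length_take]; omega
        conv_lhs => rw [hsplit]
        simp only [reverse_append, reverse_reverse, hsp]
        conv_rhs => rw [hsplit]
        simp [append_assoc, List.take_left' hk]) (prefix_append _ _)
    simp only [length_append, length_reverse, length_take] at hq
    omega
  have key : ∀ j, W ≤ j → j + 1 ≤ n →
      (palFactors (p.take (j+1))).card = (palFactors (p.take j)).card + 1 := by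
    intro j hWj hjn
    set e := j + 1 with he
    set s : List A := (p.drop (n - e)).take (2 * e - n) with hs
    have hW1 : 1 ≤ W := by omega
    have hspal : s.reverse = s := by rw [hs, hn]; exact central_pal' hpal (by omega) (by omega)
    have hslen : s.length = 2 * e - n := by rw [hs, length_take, length_drop]; omega
    have hssuf : s <:+ p.take e := by
      have h : (p.take e).drop (n - e) = s := by
        rw [hs, drop_take]; congr 1; omega
      rw [← h]; exact drop_suffix _ _
    have hsnew : s ∉ palFactors (p.take j) := by
      intro hmem
      rw [mem_palFactors'] at hmem
      obtain ⟨i, hile, hieq⟩ := infix_iff_drop_take'.mp hmem.1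
      simp only [length_take, length_drop] at hile
      have hile' : i + s.length ≤ j := by omega
      have hieq' : s = (p.drop i).take s.length := by
        conv_lhs => rw [hieq]
        rw [drop_take, take_take]
        congr 1
        omega
      set ee := i + s.length with hee
      rcases le_or_gt ee W with hcase | hcase
      · have hocc : u <:+: w.dropLast := by
          have h1 : (s.take (e + W - n)).drop (e - W) = u := by
            rw [hs, take_take, min_eq_left (by omega), drop_take, drop_drop, hu]
            congr 1
            · omega
            · congr 1; omega
          have h2 : s.take (e + W - n) = (p.drop i).take (e + W - n) := by
            conv_lhs => rw [hieq']
            rw [take_take, min_eq_left (by omega)]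
          have h3 : u <:+: (p.drop i).take (e + W - n) := by
            rw [← h2, ← h1]
            exact (drop_suffix _ _).isInfix
          have h4 : (p.drop i).take (e + W - n) <:+: p.take (W - 1) :=
            drop_take_infix' p i (e + W - n) (W - 1) (by omega)
          have h5 : p.take (W - 1) = w.dropLast := by
            rw [dropLast_eq_take, hwtake, take_take, length_take]
            congr 1; omega
          exact h5 ▸ (h3.trans h4)
        exact rich_unioccurrent' hrich (by rw [← length_pos_iff]; omega) husuf hupal humax hocc
      · have hsplit : p.take ee = p.take i ++ s := by
          conv_lhs => rw [← take_append_drop i (p.take ee)]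
          congr 1
          · rw [take_take, min_eq_left (by omega)]
          · rw [drop_take, hieq']; congr 1; omega
        have hq := hmin (p.take ee ++ (p.take i).reverse) (by
            conv_lhs => rw [hsplit]
            simp only [reverse_append, reverse_reverse, hspal]
            conv_rhs => rw [hsplit]
            simp [append_assoc]) (by
          calc w <+: p.take ee := by
                rw [hwtake]
                exact prefix_take_iff.mpr ⟨take_prefix _ _, by rw [length_take]; omega⟩
            _ <+: _ := prefix_append _ _)
        simp only [length_append, length_reverse, length_take] at hq
        omega
    have hqq' : p.take j = (p.take e).take j := by
      rw [take_take, min_eq_left (by omega)]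
    have hsub2 : insert s (palFactors (p.take j)) ⊆ palFactors (p.take e) := by
      intro y hy
      rcases Finset.mem_insert.mp hy with rfl | hy
      · exact mem_palFactors'.mpr ⟨hssuf.isInfix, hspal⟩
      · refine palFactors_mono' ?_ hy
        rw [hqq']; exact (take_prefix _ _).isInfix
    have hlow : (palFactors (p.take j)).card + 1 ≤ (palFactors (p.take e)).card := by
      rw [← Finset.card_insert_of_notMem hsnew]
      exact Finset.card_le_card hsub2
    have hup : (palFactors (p.take e)).card ≤ (palFactors (p.take j)).card + 1 := by
      have h1 : p.take e = p.take j ++ [p.get ⟨j, by omega⟩] := by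
        show p.take (j+1) = _
        rw [← take_concat_get (by omega : j < p.length)]; simp
      rw [h1]
      exact palFactors_append_le' _ _
    omega
  have main : ∀ k, W + k ≤ n → (palFactors (p.take (W + k))).card = W + k + 1 := by
    intro k
    induction k with
    | zero =>
      intro _
      simp only [Nat.add_zero]
      rw [← hwtake, hW]
      exact hrich
    | succ k ih =>
      intro hk
      have h1 := key (W + k) (by omega) (by omega)
      rw [show W + (k+1) = (W+k) + 1 by omega, h1, ih (by omega)]
  have hfin := main (n - W) (by omega)
  rw [show W + (n - W) = n by omega] at hfin
  rw [hn, take_length] at hfin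
  exact hfin

theorem palindromic_closure_rich [DecidableEq A] (w p : List A)
    (hrich : IsRich w) (hpal : p.reverse = p) (hpref : w <+: p)
    (hmin : ∀ q : List A, q.reverse = q → w <+: q → p.length ≤ q.length) :
    IsRich p := palindromic_closure_rich' w p hrich hpal hpref hmin
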